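/- Let ω : ℝ → ℝ be an antitone (nonincreasing) function that is bounded below. Then for every N > 0 there exists R ≥ N such that ω is differentiable at R and its derivative satisfies −2/R ≤ ω'(R) ≤ 0. In particular, there exists a sequence R_j → ∞ such that ω is differentiable at each R_j with 0 ≥ ω'(R_j) ≥ −2/R_j. -/

import Mathlib

open Filter MeasureTheory
open scoped ENNReal

private lemma struwe_key (ω : ℝ → ℝ) (hmono : Antitone ω)
    (hbdd : BddBelow (Set.range ω)) :
    ∀ N : ℝ, 0 < N → ∃ R : ℝ, N ≤ R ∧ DifferentiableAt ℝ ω R ∧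
      -2 / R ≤ deriv ω R ∧ deriv ω R ≤ 0 := by
  intro N hN
  by_contra h
  push_neg at h
  set g : ℝ → ℝ := fun x => -ω x with hg_def
  have hg : Monotone g := fun x y hxy => neg_le_neg (hmono hxy)
  set G := hg.stieltjesFunction with hG_def
  set μ := G.measure with hμ_def
  set D : ℝ → ℝ := fun x => (μ.rnDeriv volume x).toReal with hD_def
  have hae : ∀ᵐ x, HasDerivAt g (D x) x := hg.ae_hasDerivAt
  -- a.e. point x ≥ N has rnDeriv > 2/x
  have key : ∀ᵐ x, N ≤ x → ENNReal.ofReal (2 / x) ≤ μ.rnDeriv volume x := by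
    filter_upwards [hae] with x hx hxN
    have hωd : HasDerivAt ω (-(D x)) x := by
      have := hx.neg
      simpa [hg_def, Pi.neg_def] using this
    have hdiff : DifferentiableAt ℝ ω x := hωd.differentiableAt
    have hderiv : deriv ω x = -(D x) := hωd.deriv
    have hD0 : 0 ≤ D x := ENNReal.toReal_nonneg
    have := h x hxN hdiff
    rw [hderiv] at this
    have hlt : -(D x) < -2/x := by
      rcases lt_or_ge (-(D x)) (-2/x) with h1 | h1
      · exact h1
      · linarith [this h1]
    have h2 : 2 / x < D x := by
      have : -2/x = -(2/x) := by ring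
      rw [this] at hlt; linarith
    rcases eq_or_ne (μ.rnDeriv volume x) ⊤ with htop | htop
    · simp [htop]
    · rw [ENNReal.ofReal_le_iff_le_toReal htop]
      exact h2.le
  -- each dyadic interval contributes at least 1 to G
  have step : ∀ c : ℝ, N ≤ c → G c + 1 ≤ G (2 * c) := by
    intro c hc
    have hc0 : 0 < c := lt_of_lt_of_le hN hc
    have h1 : (1 : ℝ≥0∞) ≤ μ (Set.Ioc c (2 * c)) := by
      have hsub : ∫⁻ x in Set.Ioc c (2 * c), ENNReal.ofReal (1 / c) ∂volume ≤
          ∫⁻ x in Set.Ioc c (2 * c), μ.rnDeriv volume x ∂volume := by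
        apply setLIntegral_mono_ae (by fun_prop)
        filter_upwards [key] with x hx hxmem
        refine le_trans ?_ (hx (le_trans hc hxmem.1.le))
        apply ENNReal.ofReal_le_ofReal
        have hx0 : 0 < x := hc0.trans hxmem.1
        rw [div_le_div_iff₀ hc0 hx0]
        linarith [hxmem.2]
      have hle : ∫⁻ x in Set.Ioc c (2 * c), μ.rnDeriv volume x ∂volume ≤
          μ (Set.Ioc c (2 * c)) := Measure.setLIntegral_rnDeriv_le _
      have hconst : ∫⁻ _ in Set.Ioc c (2 * c), ENNReal.ofReal (1 / c) ∂volume =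
          ENNReal.ofReal (1 / c) * volume (Set.Ioc c (2 * c)) := by
        rw [setLIntegral_const]
      have hvol : volume (Set.Ioc c (2 * c)) = ENNReal.ofReal c := by
        rw [Real.volume_Ioc]; congr 1; ring
      have : (1 : ℝ≥0∞) ≤ ENNReal.ofReal (1 / c) * volume (Set.Ioc c (2 * c)) := by
        rw [hvol, ← ENNReal.ofReal_mul (by positivity)]
        rw [one_div, inv_mul_cancel₀ hc0.ne']
        simp
      calc (1 : ℝ≥0∞) ≤ _ := this
        _ = _ := hconst.symm
        _ ≤ _ := hsub
        _ ≤ _ := hle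
    have hmeas : μ (Set.Ioc c (2 * c)) = ENNReal.ofReal (G (2 * c) - G c) :=
      G.measure_Ioc c (2 * c)
    rw [hmeas, ENNReal.one_le_ofReal] at h1
    linarith
  -- iterate
  have iter : ∀ k : ℕ, G N + k ≤ G (2 ^ k * N) := by
    intro k
    induction k with
    | zero => simp
    | succ n ih =>
      have h2n : N ≤ 2 ^ n * N := le_mul_of_one_le_left hN.le (one_le_pow₀ (by norm_num))
      have := step (2 ^ n * N) h2n
      have heq : 2 * (2 ^ n * N) = 2 ^ (n + 1) * N := by ring
      rw [heq] at this
      push_cast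
      linarith
  -- boundedness contradiction
  obtain ⟨m, hm⟩ := hbdd
  have hGbdd : ∀ x : ℝ, G x ≤ -m := by
    intro x
    rw [hG_def, hg.stieltjesFunction_eq]
    have : Function.rightLim g x ≤ g (x + 1) := hg.rightLim_le (by linarith)
    refine this.trans ?_
    simp only [hg_def, neg_le_neg_iff]
    exact hm ⟨x + 1, rfl⟩
  obtain ⟨k, hk⟩ := exists_nat_gt (-m - G N)
  have := (iter k).trans (hGbdd _)
  linarith

/-- Strüwe's monotonicity trick: a nonincreasing function `ω : ℝ → ℝ` bounded below
admits, beyond every `N > 0`, a point `R ≥ N` of differentiability with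
`-2/R ≤ ω'(R) ≤ 0`; in particular there is a sequence `R_j → ∞` of such points. -/
theorem struwe_monotonicity_trick (ω : ℝ → ℝ) (hmono : Antitone ω)
    (hbdd : BddBelow (Set.range ω)) :
    (∀ N : ℝ, 0 < N → ∃ R : ℝ, N ≤ R ∧ DifferentiableAt ℝ ω R ∧
      -2 / R ≤ deriv ω R ∧ deriv ω R ≤ 0) ∧
    (∃ R : ℕ → ℝ, Tendsto R atTop atTop ∧ ∀ j : ℕ, DifferentiableAt ℝ ω (R j) ∧
      -2 / R j ≤ deriv ω (R j) ∧ deriv ω (R j) ≤ 0) := by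
  have main := struwe_key ω hmono hbdd
  refine ⟨main, ?_⟩
  choose R hR1 hR2 hR3 hR4 using fun j : ℕ => main (j + 1) (by positivity)
  refine ⟨R, ?_, fun j => ⟨hR2 j, hR3 j, hR4 j⟩⟩
  apply tendsto_atTop_mono (fun j => hR1 j)
  exact tendsto_atTop_add_const_right _ 1 tendsto_natCast_atTop_atTop
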